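/- For every y ∈ ℂ with 0 < |y| < 2π: e^{y/2}/(e^y − 1) = 1/y − ∑_{n=1}^{∞} ζ(1−n, 1/2)·y^{n−1}/(n−1)!, where the series converges absolutely. (Thus e^{x/2}/(e^x − 1) is, up to the indicated normalization, the generating function of the values ζ(1−n, 1/2), n ∈ ℕ, of the Hurwitz zeta function at nonpositive integers.) -/

import Mathlib

open HurwitzZeta
open Real Finset

lemma bern_bound (k : ℕ) : |(bernoulli k : ℝ)| ≤ 4 * k.factorial / (2 * π) ^ k := by
  have hpi : (2:ℝ) ≤ π := two_le_pi
  have hpi' : π < 3.15 := pi_lt_d2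
  rcases Nat.even_or_odd k with ⟨j, hj⟩ | hodd
  · rcases Nat.eq_zero_or_pos j with rfl | hj0
    · norm_num [hj]
    · subst hj
      have hk2 : j + j = 2 * j := by ring
      rw [hk2]
      set b := (bernoulli (2 * j) : ℝ) with hb
      set L := (-1 : ℝ) ^ (j + 1) * (2 : ℝ) ^ (2 * j - 1) * π ^ (2 * j) *
          b / (2 * j).factorial with hLdef
      have hL := hasSum_zeta_nat (k := j) hj0.ne'
      have h0 : (0:ℝ) ≤ L := hL.nonneg fun n => by positivity
      have h2 : L ≤ π ^ 2 / 6 := by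
        refine hasSum_le (fun n => ?_) hL hasSum_zeta_two
        rcases Nat.eq_zero_or_pos n with rfl | hn
        · rw [Nat.cast_zero, zero_pow (by omega : 2 * j ≠ 0), zero_pow two_ne_zero]
        · have h1n : (1:ℝ) ≤ (n:ℝ) := by exact_mod_cast hn
          exact one_div_le_one_div_of_le (by positivity)
            (pow_le_pow_right₀ h1n (by omega : 2 ≤ 2 * j))
      have hfac : (0:ℝ) < ((2 * j).factorial : ℝ) := by positivity
      have hc : (0:ℝ) < 2 ^ (2 * j - 1) * π ^ (2 * j) := by positivity
      have hnum : 0 ≤ (-1 : ℝ) ^ (j + 1) * 2 ^ (2 * j - 1) * π ^ (2 * j) * b := by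
        have := mul_nonneg h0 hfac.le
        rwa [hLdef, div_mul_cancel₀ _ hfac.ne'] at this
      have hsign : 0 ≤ (-1 : ℝ) ^ (j + 1) * b :=
        nonneg_of_mul_nonneg_right (by nlinarith) hc
      have habs : |b| = (-1 : ℝ) ^ (j + 1) * b := by
        rcases Nat.even_or_odd (j + 1) with he | ho
        · rw [he.neg_one_pow] at hsign ⊢; rw [one_mul] at hsign ⊢; exact abs_of_nonneg hsign
        · rw [ho.neg_one_pow] at hsign ⊢
          rw [neg_one_mul] at hsign ⊢
          rw [abs_of_nonpos (by linarith)]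
      have hkey : |b| * (2 ^ (2 * j - 1) * π ^ (2 * j)) ≤ (π ^ 2 / 6) * (2 * j).factorial := by
        have : |b| * (2 ^ (2 * j - 1) * π ^ (2 * j)) = L * (2 * j).factorial := by
          rw [habs, hLdef, div_mul_cancel₀ _ hfac.ne']; ring
        rw [this]
        exact mul_le_mul_of_nonneg_right h2 hfac.le
      rw [le_div_iff₀ (by positivity)]
      have h2pow : (2:ℝ) ^ (2 * j) = 2 * 2 ^ (2 * j - 1) := by
        rw [← pow_succ']; congr 1; omega
      have h2pi : (2 * π) ^ (2 * j) = 2 * (2 ^ (2 * j - 1) * π ^ (2 * j)) := by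
        rw [mul_pow, h2pow]; ring
      rw [h2pi]
      nlinarith [hkey, mul_nonneg hfac.le (by nlinarith : (0:ℝ) ≤ 12 - π ^ 2)]
  · rcases Nat.lt_or_ge k 2 with hk2 | hk2
    · interval_cases k
      · norm_num
      · rw [bernoulli_one, le_div_iff₀ (by positivity)]
        push_cast
        rw [show |(-1:ℝ)/2| = 1/2 by rw [abs_div]; norm_num]
        norm_num
        nlinarith
    · rw [bernoulli_eq_bernoulli'_of_ne_one (by omega),
        bernoulli'_eq_zero_of_odd hodd (by omega)]
      norm_num
      positivity


noncomputable def Bc (n : ℕ) : ℂ :=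
  ((Polynomial.bernoulli n).map (algebraMap ℚ ℂ)).eval (1 / 2 : ℂ)

lemma Bc_eq (n : ℕ) : Bc n = ∑ i ∈ range (n + 1),
    (bernoulli (n - i) : ℂ) * (n.choose i : ℂ) * (1 / 2 : ℂ) ^ i := by
  rw [Bc, Polynomial.bernoulli_def, Polynomial.map_sum, Polynomial.eval_finset_sum]
  refine Finset.sum_congr rfl fun i _ => ?_
  rw [Polynomial.map_monomial, Polynomial.eval_monomial]
  simp only [map_mul, map_natCast, eq_ratCast]

lemma Bc_bound (n : ℕ) :
    ‖Bc n‖ ≤ 4 * Real.exp π * n.factorial / (2 * π) ^ n := by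
  rw [Bc_eq]
  refine (norm_sum_le _ _).trans ?_
  have step : ∀ i ∈ range (n + 1),
      ‖(bernoulli (n - i) : ℂ) * (n.choose i : ℂ) * (1 / 2 : ℂ) ^ i‖ ≤
        (4 * n.factorial / (2 * π) ^ n) * (π ^ i / i.factorial) := by
    intro i hi
    rw [mem_range] at hi
    have hin : i ≤ n := by omega
    rw [norm_mul, norm_mul, norm_pow]
    have h1 : ‖((bernoulli (n - i) : ℚ) : ℂ)‖ = |(bernoulli (n - i) : ℝ)| := by
      rw [show ((bernoulli (n - i) : ℚ) : ℂ) = (((bernoulli (n - i) : ℝ)) : ℂ) by push_cast; rfl,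
        Complex.norm_real, Real.norm_eq_abs]
    rw [h1, Complex.norm_natCast]
    have h2 : ‖(1 / 2 : ℂ)‖ = 1 / 2 := by
      simp
    rw [h2]
    have hch : (n.choose i : ℝ) = n.factorial / (i.factorial * (n - i).factorial) := by
      rw [Nat.cast_choose ℝ hin]
    calc |(bernoulli (n - i) : ℝ)| * (n.choose i : ℝ) * (1 / 2) ^ i
        ≤ (4 * (n - i).factorial / (2 * π) ^ (n - i)) * (n.choose i : ℝ) * (1 / 2) ^ i := by
          gcongr
          exact bern_bound _
      _ = (4 * n.factorial / (2 * π) ^ n) * (π ^ i / i.factorial) := by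
          rw [hch]
          have hsplit : (2 * π) ^ n = (2 * π) ^ (n - i) * (2 * π) ^ i := by
            rw [← pow_add]; congr 1; omega
          rw [hsplit]
          have hπ : (0:ℝ) < π := Real.pi_pos
          have f1 : ((n-i).factorial : ℝ) ≠ 0 := by positivity
          have f2 : (i.factorial : ℝ) ≠ 0 := by positivity
          field_simp
          ring_nf
          rw [mul_assoc, ← mul_pow]
          norm_num
  refine (Finset.sum_le_sum step).trans ?_
  rw [← Finset.mul_sum]
  have hsum : ∑ i ∈ range (n + 1), π ^ i / (i.factorial : ℝ) ≤ Real.exp π := by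
    refine Summable.sum_le_tsum (L := SummationFilter.unconditional ℕ) _ (fun i _ => by positivity) ?_ |>.trans_eq ?_
    · exact NormedSpace.expSeries_div_summable π
    · rw [Real.exp_eq_exp_ℝ, NormedSpace.exp_eq_tsum_div]
  calc (4 * ↑n.factorial / (2 * π) ^ n) * ∑ i ∈ range (n + 1), π ^ i / (i.factorial : ℝ)
      ≤ (4 * ↑n.factorial / (2 * π) ^ n) * Real.exp π := by
        exact mul_le_mul_of_nonneg_left hsum (by positivity)
    _ = 4 * Real.exp π * ↑n.factorial / (2 * π) ^ n := by ring


lemma half_ne_zero' : ((1 / 2 : ℝ) : UnitAddCircle) ≠ 0 := by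
  intro h
  rw [AddCircle.coe_eq_zero_iff] at h
  obtain ⟨n, hn⟩ := h
  have : (n : ℝ) = 1 / 2 := by simpa using hn
  have h2 : (2 : ℝ) * n = 1 := by linarith
  have h3 : ((2 * n : ℤ) : ℝ) = ((1 : ℤ) : ℝ) := by push_cast; linarith
  have := Int.cast_injective h3
  omega

lemma neg_half_eq : -((1 / 2 : ℝ) : UnitAddCircle) = ((1 / 2 : ℝ) : UnitAddCircle) := by
  have : ((1 / 2 : ℝ) : UnitAddCircle) + ((1 / 2 : ℝ) : UnitAddCircle) = 0 := by
    rw [← AddCircle.coe_add, AddCircle.coe_eq_zero_iff]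
    exact ⟨1, by norm_num⟩
  exact neg_eq_of_add_eq_zero_left this

lemma hz_val (m : ℕ) : hurwitzZeta ((1 / 2 : ℝ) : UnitAddCircle) (-(m : ℂ)) =
    -(Bc (m + 1)) / (m + 1) := by
  rcases Nat.eq_zero_or_pos m with rfl | hm
  · rw [show -((0:ℕ):ℂ) = 0 by norm_num, hurwitzZeta]
    have hodd : hurwitzZetaOdd ((1/2:ℝ):UnitAddCircle) 0 = 0 := by
      have h := hurwitzZetaOdd_neg ((1/2:ℝ):UnitAddCircle) 0
      rw [neg_half_eq] at h
      linear_combination h / 2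
    have hBc1 : Bc 1 = 0 := by
      rw [Bc_eq]
      simp [Finset.sum_range_succ, bernoulli_one]
      norm_num
    rw [hurwitzZetaEven_apply_zero, if_neg half_ne_zero', hodd, hBc1]
    norm_num
  · have := hurwitzZeta_neg_nat (k := m) (x := 1/2) hm.ne' (by constructor <;> norm_num)
    rw [this, Bc]
    push_cast
    ring


-- Summability of the Bc power series
lemma Bc_summable {y : ℂ} (hy : ‖y‖ < 2 * π) :
    Summable (fun n : ℕ => ‖Bc n / n.factorial * y ^ n‖) := by
  have h2π : (0:ℝ) < 2 * π := by positivity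
  refine Summable.of_nonneg_of_le (fun n => norm_nonneg _)
    (fun n => ?_) (((summable_geometric_of_lt_one (by positivity)
      ((div_lt_one h2π).mpr hy)).mul_left (4 * Real.exp π)))
  rw [norm_mul, norm_div, norm_pow, Complex.norm_natCast]
  calc ‖Bc n‖ / (n.factorial : ℝ) * ‖y‖ ^ n
      ≤ (4 * Real.exp π * n.factorial / (2 * π) ^ n) / (n.factorial : ℝ) * ‖y‖ ^ n := by
        gcongr
        exact Bc_bound n
    _ = 4 * Real.exp π * (‖y‖ / (2 * π)) ^ n := by
        have : (n.factorial : ℝ) ≠ 0 := by positivity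
        have hπ : π ≠ 0 := Real.pi_ne_zero
        field_simp
        ring_nf
        rw [mul_assoc, mul_assoc, mul_assoc, ← mul_pow, ← mul_pow, ← mul_pow, mul_inv_cancel_left₀ hπ]
        norm_num

open PowerSeries in
lemma exp_coeff_norm (n : ℕ) :
    ‖(PowerSeries.coeff n (PowerSeries.exp ℂ - 1))‖ ≤ 1 / (n.factorial : ℝ) := by
  rw [map_sub, PowerSeries.coeff_exp, PowerSeries.coeff_one, eq_ratCast]
  rcases eq_or_ne n 0 with rfl | hn
  · simp
  · rw [if_neg hn, sub_zero]
    push_cast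
    simp

open PowerSeries in
lemma exp_coeff_summable {y : ℂ} :
    Summable (fun n : ℕ => ‖(PowerSeries.coeff n (PowerSeries.exp ℂ - 1)) * y ^ n‖) := by
  refine Summable.of_nonneg_of_le (fun n => norm_nonneg _) (fun n => ?_)
    (Real.summable_pow_div_factorial ‖y‖)
  rw [norm_mul, norm_pow]
  calc ‖PowerSeries.coeff n (PowerSeries.exp ℂ - 1)‖ * ‖y‖ ^ n
      ≤ 1 / (n.factorial : ℝ) * ‖y‖ ^ n :=
        mul_le_mul_of_nonneg_right (exp_coeff_norm n) (by positivity)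
    _ = ‖y‖ ^ n / n.factorial := by ring

open PowerSeries in
lemma key_product {y : ℂ} (hy : ‖y‖ < 2 * π) :
    (∑' n : ℕ, Bc n / n.factorial * y ^ n) * (Complex.exp y - 1) =
      y * Complex.exp (y / 2) := by
  -- the exp series
  have hg : HasSum (fun n : ℕ => (PowerSeries.coeff n (PowerSeries.exp ℂ - 1)) * y ^ n)
      (Complex.exp y - 1) := by
    have h1 : HasSum (fun n : ℕ => y ^ n / n.factorial) (Complex.exp y) := by
      rw [Complex.exp_eq_exp_ℂ]
      exact NormedSpace.expSeries_div_hasSum_exp y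
    have h2 : HasSum (fun n : ℕ => if n = 0 then (1:ℂ) else 0) 1 := hasSum_ite_eq 0 1
    refine (h1.sub h2).congr_fun fun n => ?_
    rw [map_sub, PowerSeries.coeff_exp, PowerSeries.coeff_one, eq_ratCast, sub_mul]
    rcases eq_or_ne n 0 with rfl | hn
    · simp
    · rw [if_neg hn]
      push_cast
      ring
  -- coefficients of the Bernoulli series
  have hBk : ∀ k : ℕ, (PowerSeries.coeff k (PowerSeries.mk fun k =>
      Polynomial.aeval (1/2 : ℂ) ((1 / (k.factorial : ℚ)) • Polynomial.bernoulli k)))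
      = Bc k / k.factorial := by
    intro k
    rw [PowerSeries.coeff_mk, map_smul, Bc, Polynomial.eval_map, ← Polynomial.aeval_def,
      Algebra.smul_def, eq_ratCast]
    push_cast
    ring
  have cauchy := tsum_mul_tsum_eq_tsum_sum_antidiagonal_of_summable_norm
    (Bc_summable hy) (exp_coeff_summable (y := y))
  rw [hg.tsum_eq] at cauchy
  rw [cauchy]
  -- identify the inner sums
  have inner : ∀ n : ℕ, ∑ kl ∈ Finset.HasAntidiagonal.antidiagonal n,
      (Bc kl.1 / kl.1.factorial * y ^ kl.1) * ((PowerSeries.coeff kl.2 (PowerSeries.exp ℂ - 1)) * y ^ kl.2)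
      = y ^ n * PowerSeries.coeff n (PowerSeries.X * PowerSeries.rescale (1/2 : ℂ) (PowerSeries.exp ℂ)) := by
    intro n
    have hgen := congrArg (PowerSeries.coeff n)
      (Polynomial.bernoulli_generating_function (A := ℂ) (1/2 : ℂ))
    rw [PowerSeries.coeff_mul] at hgen
    rw [← hgen, Finset.mul_sum]
    refine Finset.sum_congr rfl fun kl hkl => ?_
    rw [Finset.HasAntidiagonal.mem_antidiagonal] at hkl
    rw [hBk kl.1, ← hkl, pow_add]
    ring
  simp_rw [inner]
  -- sum the right-hand series
  set f : ℕ → ℂ := fun n => y ^ n *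
    PowerSeries.coeff n (PowerSeries.X * PowerSeries.rescale (1/2 : ℂ) (PowerSeries.exp ℂ)) with hf
  have hexp2 : HasSum (fun m : ℕ => y * ((y/2) ^ m / m.factorial)) (y * Complex.exp (y / 2)) := by
    have : HasSum (fun m : ℕ => (y/2) ^ m / m.factorial) (Complex.exp (y/2)) := by
      rw [Complex.exp_eq_exp_ℂ]
      exact NormedSpace.expSeries_div_hasSum_exp (y/2)
    exact this.mul_left y
  have h2 : HasSum (fun m : ℕ => f (m + 1)) (y * Complex.exp (y / 2)) := by
    refine hexp2.congr_fun fun m => ?_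
    rw [hf]
    simp only [PowerSeries.coeff_succ_X_mul, PowerSeries.coeff_rescale, PowerSeries.coeff_exp,
      eq_ratCast]
    push_cast
    rw [div_pow]
    have h22 : ((1:ℂ) / 2) ^ m * 2 ^ m = 1 := by rw [← mul_pow]; norm_num
    field_simp
    linear_combination (-(y * y ^ m * (m.factorial : ℂ)⁻¹)) * h22
  have h3 : ∑ i ∈ Finset.range 1, f i = 0 := by
    simp [hf, PowerSeries.coeff_zero_X_mul]
  have h4 : HasSum (fun n => f (n + 1)) (y * Complex.exp (y / 2) - ∑ i ∈ Finset.range 1, f i) := by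
    rw [h3, sub_zero]; exact h2
  exact ((hasSum_nat_add_iff' 1).mp h4).tsum_eq


/-- For `0 < |y| < 2π`, `e^{y/2}/(e^y − 1) = 1/y − ∑_{n≥1} ζ(1−n,1/2)·y^{n−1}/(n−1)!`
(written below with `n = m + 1`, so the sum is `∑_{m≥0} ζ(−m,1/2)·y^m/m!`), and the series
converges absolutely.  Thus `e^{x/2}/(e^x−1)` is a generating function for the values of the
Hurwitz zeta function `ζ(s,1/2)` at nonpositive integers. -/
theorem hurwitzZeta_half_generating_function (y : ℂ)
    (hy0 : 0 < ‖y‖) (hy : ‖y‖ < 2 * Real.pi) :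
    Summable (fun m : ℕ =>
      ‖hurwitzZeta ((1 / 2 : ℝ) : UnitAddCircle) (-(m : ℂ)) * y ^ m / (m.factorial : ℂ)‖) ∧
    Complex.exp (y / 2) / (Complex.exp y - 1) =
      1 / y - ∑' m : ℕ,
        hurwitzZeta ((1 / 2 : ℝ) : UnitAddCircle) (-(m : ℂ)) * y ^ m / (m.factorial : ℂ) := by
  have hyne : y ≠ 0 := by
    intro h; rw [h] at hy0; simp at hy0
  have hEne : Complex.exp y - 1 ≠ 0 := by
    rw [sub_ne_zero]
    intro h
    rw [Complex.exp_eq_one_iff] at h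
    obtain ⟨n, hn⟩ := h
    have hn0 : n ≠ 0 := by
      rintro rfl
      simp at hn
      exact hyne hn
    have habs : ‖y‖ = |(n : ℝ)| * (2 * π) := by
      rw [hn]
      rw [norm_mul, norm_mul, norm_mul, Complex.norm_I, Complex.norm_two, Complex.norm_real, Real.norm_eq_abs, Complex.norm_intCast]
      push_cast
      rw [abs_of_pos Real.pi_pos]
      ring
    have h1n : (1:ℝ) ≤ |(n : ℝ)| := by
      rw [← Int.cast_abs]
      exact_mod_cast Int.one_le_abs hn0
    nlinarith [Real.pi_pos]
  -- rewrite the terms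
  have hterm : ∀ m : ℕ, hurwitzZeta ((1 / 2 : ℝ) : UnitAddCircle) (-(m : ℂ)) * y ^ m /
      (m.factorial : ℂ) = -(Bc (m + 1) / ((m + 1).factorial : ℂ) * y ^ (m + 1)) / y := by
    intro m
    rw [hz_val m]
    have h1 : ((m + 1).factorial : ℂ) = ((m : ℂ) + 1) * (m.factorial : ℂ) := by
      rw [Nat.factorial_succ]; push_cast; ring
    have h2 : ((m : ℂ) + 1) ≠ 0 := Nat.cast_add_one_ne_zero m
    have h3 : (m.factorial : ℂ) ≠ 0 := by exact_mod_cast m.factorial_ne_zero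
    rw [h1]
    field_simp
    ring
  -- summability
  have hsum : Summable (fun m : ℕ =>
      ‖hurwitzZeta ((1 / 2 : ℝ) : UnitAddCircle) (-(m : ℂ)) * y ^ m / (m.factorial : ℂ)‖) := by
    have hS := Bc_summable (y := y) hy
    have hS1 : Summable (fun m : ℕ => ‖Bc (m + 1) / ((m + 1).factorial : ℂ) * y ^ (m + 1)‖) :=
      (summable_nat_add_iff 1).mpr hS
    refine (hS1.div_const ‖y‖).congr fun m => ?_
    rw [hterm m, norm_div, norm_neg]
  refine ⟨hsum, ?_⟩
  -- the sum
  set f : ℕ → ℂ := fun n => Bc n / (n.factorial : ℂ) * y ^ n with hfdef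
  have hSf : Summable f := (Bc_summable hy).of_norm
  have hf0 : f 0 = 1 := by
    rw [hfdef]
    simp [Bc]
  have hshift : HasSum (fun m => f (m + 1)) ((∑' n, f n) - ∑ i ∈ Finset.range 1, f i) :=
    (hasSum_nat_add_iff' 1).mpr hSf.hasSum
  rw [Finset.sum_range_one, hf0] at hshift
  have hT : HasSum (fun m : ℕ => hurwitzZeta ((1 / 2 : ℝ) : UnitAddCircle) (-(m : ℂ)) * y ^ m /
      (m.factorial : ℂ)) (-(((∑' n, f n) - 1) / y)) := by
    refine ((hshift.div_const y).neg).congr_fun fun m => ?_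
    rw [hterm m, neg_div]
  rw [hT.tsum_eq]
  have hkey := key_product (y := y) hy
  rw [← hfdef] at hkey
  have hS' : (1:ℂ)/y - (-(((∑' n, f n) - 1) / y)) = (∑' n, f n) / y := by ring
  have hkey' : (∑' n : ℕ, f n) * (Complex.exp y - 1) = y * Complex.exp (y / 2) := hkey
  rw [hS', div_eq_div_iff hEne hyne]
  linear_combination -hkey'
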